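/- Assume the posterior likelihood function φ satisfies internal consistency [INC]. Then for every connected component C of the graph of information G there exists a strictly positive function f_C : C → ℝ such that φ(ω, ω') = f_C(ω)/f_C(ω') for every edge (ω, ω') ∈ E with ω, ω' ∈ C, and f_C is F-measurable on C, i.e., f_C(ω) = f_C(ω') whenever ω, ω' ∈ C and ω' ∈ F(ω). -/

import Mathlib

open Finset

/-- `ωs` (a sequence of `m+1` states) is a path of edges of `E`. -/
def IsPath {Ω : Type} (E : Ω → Ω → Prop) {m : ℕ} (ωs : Fin (m + 1) → Ω) : Prop :=
  ∀ i : Fin m, E (ωs i.castSucc) (ωs i.succ)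

/-- The product of the values of `φ` along the edges of the path `ωs`. -/
noncomputable def pathProd {Ω : Type} (φ : Ω → Ω → ℝ) {m : ℕ} (ωs : Fin (m + 1) → Ω) : ℝ :=
  ∏ i : Fin m, φ (ωs i.castSucc) (ωs i.succ)

/-- `ω ↠ ω'`: there is a finite path of edges of `E` from `ω` to `ω'`. -/
def Reach {Ω : Type} (E : Ω → Ω → Prop) (ω ω' : Ω) : Prop :=
  ∃ (m : ℕ) (ωs : Fin (m + 1) → Ω), IsPath E ωs ∧ ωs 0 = ω ∧ ωs (Fin.last m) = ω'

/-- Internal consistency [INC]: the product of `φ` along every F-cycle equals 1. -/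
def INCc {Ω : Type} (E F : Ω → Ω → Prop) (φ : Ω → Ω → ℝ) : Prop :=
  ∀ (m : ℕ) (ωs : Fin (m + 1) → Ω), IsPath E ωs → F (ωs 0) (ωs (Fin.last m)) →
    pathProd φ ωs = 1

inductive RC {Ω : Type} (E : Ω → Ω → Prop) (φ : Ω → Ω → ℝ) : Ω → Ω → ℝ → Prop
  | refl (ω : Ω) : RC E φ ω ω 1
  | tail {ω ω' ω'' : Ω} {r : ℝ} : RC E φ ω ω' r → E ω' ω'' → RC E φ ω ω'' (r * φ ω' ω'')

theorem rc_of_path {Ω : Type} {E : Ω → Ω → Prop} {φ : Ω → Ω → ℝ} :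
    ∀ {m : ℕ} (ωs : Fin (m + 1) → Ω), IsPath E ωs →
      RC E φ (ωs 0) (ωs (Fin.last m)) (pathProd φ ωs) := by
  intro m
  induction m with
  | zero =>
    intro ωs _
    have : pathProd φ ωs = 1 := by simp [pathProd]
    rw [this]
    exact RC.refl _
  | succ m ih =>
    intro ωs h
    set ωs' : Fin (m + 1) → Ω := fun i => ωs i.castSucc with hωs'
    have hpath' : IsPath E ωs' := by
      intro i
      have := h i.castSucc
      rw [Fin.succ_castSucc] at this
      exact this
    have hrc := ih ωs' hpath'
    have h0 : ωs' 0 = ωs 0 := by simp [ωs']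
    have hl : ωs' (Fin.last m) = ωs (Fin.last m).castSucc := rfl
    have hedge : E (ωs (Fin.last m).castSucc) (ωs (Fin.last (m+1))) := by
      have := h (Fin.last m)
      rwa [Fin.succ_last] at this
    have hprod : pathProd φ ωs =
        pathProd φ ωs' * φ (ωs (Fin.last m).castSucc) (ωs (Fin.last (m+1))) := by
      rw [pathProd, Fin.prod_univ_castSucc]
      congr 1
    rw [hprod]
    rw [h0, hl] at hrc
    exact RC.tail hrc hedge

theorem path_of_rc {Ω : Type} {E : Ω → Ω → Prop} {φ : Ω → Ω → ℝ} {ω ω' : Ω} {r : ℝ}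
    (h : RC E φ ω ω' r) :
    ∃ (m : ℕ) (ωs : Fin (m + 1) → Ω), IsPath E ωs ∧ ωs 0 = ω ∧ ωs (Fin.last m) = ω' ∧
      pathProd φ ωs = r := by
  induction h with
  | refl =>
    exact ⟨0, fun _ => ω, fun i => i.elim0, rfl, rfl, by simp [pathProd]⟩
  | tail h hedge ih =>
    rename_i b c s
    obtain ⟨m, ωs, hp, h0, hl, hprod⟩ := ih
    refine ⟨m + 1, Fin.snoc ωs c, ?_, ?_, ?_, ?_⟩
    · intro i
      induction i using Fin.lastCases with
      | last =>
        rw [Fin.succ_last, Fin.snoc_castSucc, Fin.snoc_last, hl]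
        exact hedge
      | cast j =>
        rw [Fin.succ_castSucc, Fin.snoc_castSucc, Fin.snoc_castSucc]
        exact hp j
    · rw [show (0 : Fin (m+2)) = (0 : Fin (m+1)).castSucc by rfl, Fin.snoc_castSucc, h0]
    · rw [Fin.snoc_last]
    · rw [pathProd, Fin.prod_univ_castSucc]
      congr 1
      · rw [← hprod, pathProd]
        apply Finset.prod_congr rfl
        intro i _
        rw [Fin.succ_castSucc, Fin.snoc_castSucc, Fin.snoc_castSucc]
      · rw [Fin.succ_last, Fin.snoc_castSucc, Fin.snoc_last, hl]

theorem rc_pos {Ω : Type} {E : Ω → Ω → Prop} {φ : Ω → Ω → ℝ}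
    (hpos : ∀ ω ω', E ω ω' → 0 < φ ω ω') {ω ω' : Ω} {r : ℝ}
    (h : RC E φ ω ω' r) : 0 < r := by
  induction h with
  | refl => exact one_pos
  | tail h hedge ih => exact mul_pos ih (hpos _ _ hedge)

theorem rc_trans {Ω : Type} {E : Ω → Ω → Prop} {φ : Ω → Ω → ℝ} {a b c : Ω} {r s : ℝ}
    (h1 : RC E φ a b r) (h2 : RC E φ b c s) : RC E φ a c (r * s) := by
  induction h2 with
  | refl => rwa [mul_one]
  | tail h hedge ih => rw [← mul_assoc]; exact RC.tail ih hedge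

theorem rc_symm {Ω : Type} {E : Ω → Ω → Prop} {φ : Ω → Ω → ℝ}
    (hsymm : ∀ ω ω', E ω ω' → E ω' ω)
    (hpos : ∀ ω ω', E ω ω' → 0 < φ ω ω')
    (hrec : ∀ ω ω', E ω ω' → φ ω ω' = 1 / φ ω' ω)
    {ω ω' : Ω} {r : ℝ} (h : RC E φ ω ω' r) : RC E φ ω' ω r⁻¹ := by
  induction h with
  | refl => rw [inv_one]; exact RC.refl _
  | tail h hedge ih =>
    rename_i b c s
    have e2 : E c b := hsymm _ _ hedge
    have step : RC E φ c b (1 * φ c b) := RC.tail (RC.refl c) e2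
    have := rc_trans step ih
    have hval : 1 * φ c b * s⁻¹ = (s * φ b c)⁻¹ := by
      rw [one_mul, hrec c b e2]
      have h1 : φ b c ≠ 0 := ne_of_gt (hpos _ _ hedge)
      field_simp
    rwa [hval] at this

/-- under [INC], every connected component `C` carries a strictly
positive function `f_C` representing `φ` as a ratio on edges within `C`, which
is moreover F-measurable on `C`. -/
theorem stmt_2 {Ω : Type} [Fintype Ω] [Nonempty Ω] {n : ℕ} (hn : 2 ≤ n)
    (P : Fin n → Ω → Ω → Prop) (hP : ∀ i, Equivalence (P i))
    (F : Ω → Ω → Prop) (hF : Equivalence F)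
    (E : Ω → Ω → Prop) (hE : ∀ ω ω', E ω ω' ↔ ∃ i, P i ω ω')
    (φ : Ω → Ω → ℝ)
    (hpos : ∀ ω ω', E ω ω' → 0 < φ ω ω')
    (hrec : ∀ ω ω', E ω ω' → φ ω ω' = 1 / φ ω' ω)
    (hINC : INCc E F φ)
    -- `C` is a connected component: nonempty, pairwise connected and maximal
    (C : Set Ω) (hC1 : C.Nonempty)
    (hC2 : ∀ ω ∈ C, ∀ ω' ∈ C, Reach E ω ω')
    (hC3 : ∀ ω ∈ C, ∀ ω', Reach E ω ω' → ω' ∈ C) :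
    ∃ f : Ω → ℝ, (∀ ω ∈ C, 0 < f ω) ∧
      (∀ ω ω', ω ∈ C → ω' ∈ C → E ω ω' → φ ω ω' = f ω / f ω') ∧
      (∀ ω ω', ω ∈ C → ω' ∈ C → F ω ω' → f ω = f ω') := by
  obtain ⟨ω₀, hω₀⟩ := hC1
  have hsymm : ∀ ω ω', E ω ω' → E ω' ω := by
    intro ω ω' h
    obtain ⟨i, hi⟩ := (hE ω ω').1 h
    exact (hE ω' ω).2 ⟨i, (hP i).symm hi⟩
  -- Reach gives RC
  have reach_rc : ∀ {a b : Ω}, Reach E a b → ∃ r, RC E φ a b r := by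
    rintro a b ⟨m, ωs, hp, h0, hl⟩
    refine ⟨pathProd φ ωs, ?_⟩
    have := rc_of_path (φ := φ) ωs hp
    rwa [h0, hl] at this
  -- under F-relation, any RC value is 1
  have rc_one : ∀ {a b : Ω} {r : ℝ}, RC E φ a b r → F a b → r = 1 := by
    intro a b r h hab
    obtain ⟨m, ωs, hp, h0, hl, hprod⟩ := path_of_rc h
    rw [← hprod]
    exact hINC m ωs hp (by rwa [h0, hl])
  -- uniqueness of RC values from ω₀
  have rc_unique : ∀ {b : Ω} {r s : ℝ}, RC E φ ω₀ b r → RC E φ ω₀ b s → r = s := by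
    intro b r s h1 h2
    have h3 := rc_symm hsymm hpos hrec h2
    have h4 := rc_trans h1 h3
    have h5 : r * s⁻¹ = 1 := rc_one h4 (hF.refl ω₀)
    have hs : s ≠ 0 := ne_of_gt (rc_pos hpos h2)
    field_simp at h5
    exact h5
  have hgex : ∀ ω : Ω, ∃ r : ℝ, ω ∈ C → RC E φ ω₀ ω r := by
    intro ω
    by_cases h : ω ∈ C
    · obtain ⟨r, hr⟩ := reach_rc (hC2 ω₀ hω₀ ω h)
      exact ⟨r, fun _ => hr⟩
    · exact ⟨1, fun hc => absurd hc h⟩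
  choose g hg using hgex
  refine ⟨fun ω => (g ω)⁻¹, ?_, ?_, ?_⟩
  · intro ω hω
    exact inv_pos.2 (rc_pos hpos (hg ω hω))
  · intro ω ω' hω hω' hedge
    have h1 : RC E φ ω₀ ω' (g ω * φ ω ω') := RC.tail (hg ω hω) hedge
    have h2 : g ω' = g ω * φ ω ω' := rc_unique (hg ω' hω') h1
    have hgω : g ω ≠ 0 := ne_of_gt (rc_pos hpos (hg ω hω))
    have hgω' : g ω' ≠ 0 := ne_of_gt (rc_pos hpos (hg ω' hω'))
    show φ ω ω' = (g ω)⁻¹ / (g ω')⁻¹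
    rw [h2]
    field_simp
  · intro ω ω' hω hω' hrel
    obtain ⟨t, ht⟩ := reach_rc (hC2 ω hω ω' hω')
    have ht1 : t = 1 := rc_one ht hrel
    rw [ht1] at ht
    have h1 : RC E φ ω₀ ω' (g ω * 1) := rc_trans (hg ω hω) ht
    have h2 : g ω' = g ω * 1 := rc_unique (hg ω' hω') h1
    show (g ω)⁻¹ = (g ω')⁻¹
    rw [h2, mul_one]
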